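/- For all integers 1 ≤ r ≤ k there exists a map φ : Δ_k → C([0, ω^r]) such that (r/k)·d_Δ(σ,τ) ≤ ‖φ(σ) − φ(τ)‖_∞ ≤ d_Δ(σ,τ) for all σ, τ ∈ Δ_k; in particular, Δ_k admits a bi-Lipschitz embedding into C([0, ω^r]) with distortion at most k/r. -/

import Mathlib

/-- The compact space `[0, α]` of ordinals `≤ α` with the order topology. -/
noncomputable instance (a : Ordinal) : CompactSpace (Set.Iic a) :=
  isCompact_iff_compactSpace.mp (by rw [← Set.Icc_bot]; exact isCompact_Icc)

open Ordinal

set_option maxHeartbeats 1000000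
set_option synthInstance.maxHeartbeats 400000

noncomputable def oNat (x : Ordinal) : ℕ :=
  if h : x < omega0 then Classical.choose (Ordinal.lt_omega0.1 h) else 0

lemma oNat_spec {x : Ordinal} (h : x < omega0) : ((oNat x : ℕ) : Ordinal) = x := by
  rw [oNat, dif_pos h]; exact (Classical.choose_spec (Ordinal.lt_omega0.1 h)).symm

lemma oNat_natCast (n : ℕ) : oNat (n : Ordinal) = n := by
  have := oNat_spec (nat_lt_omega0 n)
  exact_mod_cast this

noncomputable def Ufn : ℕ → Ordinal → Finset ℕ
  | 0, x => if x = 0 then {0} else ∅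
  | (r+1), x =>
      if x % omega0 = 0 then Ufn r (x / omega0)
      else Ufn r (x / omega0 + 1) ∪
        {(Ufn r (x / omega0 + 1)).sup id + (oNat (x % omega0) - 1)}

lemma Ufn_omega_mul (r : ℕ) (x : Ordinal) : Ufn (r+1) (omega0 * x) = Ufn r x := by
  have h1 : omega0 * x % omega0 = 0 := by
    simpa using Ordinal.mul_add_mod_self omega0 x 0
  rw [Ufn, if_pos h1, Ordinal.mul_div_cancel _ omega0_ne_zero]

lemma Ufn_mul_add (r : ℕ) (q : Ordinal) (s : ℕ) (hs : 1 ≤ s) :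
    Ufn (r+1) (omega0 * q + s) = Ufn r (q + 1) ∪ {(Ufn r (q + 1)).sup id + (s - 1)} := by
  have hslt : (s : Ordinal) < omega0 := nat_lt_omega0 s
  have hmod : (omega0 * q + s) % omega0 = s := by
    rw [Ordinal.mul_add_mod_self, Ordinal.mod_eq_of_lt hslt]
  have hdiv : (omega0 * q + s) / omega0 = q := by
    rw [Ordinal.mul_add_div _ omega0_ne_zero, Ordinal.div_eq_zero_of_lt hslt, add_zero]
  have hne : (omega0 * q + s) % omega0 ≠ 0 := by
    rw [hmod]
    have : (0:ℕ) < s := hs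
    exact_mod_cast this.ne'
  rw [Ufn, if_neg hne, hmod, hdiv, oNat_natCast]

lemma union_inter_Iic {A : Finset ℕ} {e N : ℕ} (he : N < e) :
    (A ∪ {e}) ∩ Finset.Iic N = A ∩ Finset.Iic N := by
  ext a
  simp only [Finset.mem_inter, Finset.mem_union, Finset.mem_singleton, Finset.mem_Iic]
  constructor
  · rintro ⟨h1 | rfl, h2⟩
    · exact ⟨h1, h2⟩
    · omega
  · rintro ⟨h1, h2⟩; exact ⟨Or.inl h1, h2⟩

-- decomposition helpers
lemma decomp_succQ {Q' x : Ordinal} {N : ℕ}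
    (h1 : omega0 * Q' + (N+1 : ℕ) < x) (h2 : x < omega0 * (Q' + 1)) :
    ∃ s : ℕ, N + 1 < s ∧ x = omega0 * Q' + s := by
  have hq : x / omega0 = Q' := by
    apply le_antisymm
    · rw [Ordinal.div_le omega0_ne_zero, ← add_one_eq_succ]
      exact h2
    · rw [Ordinal.le_div omega0_ne_zero]
      calc omega0 * Q' ≤ omega0 * Q' + (N+1:ℕ) := le_add_right le_rfl
        _ ≤ x := h1.le
  have hmodlt : x % omega0 < omega0 := Ordinal.mod_lt x omega0_ne_zero
  refine ⟨oNat (x % omega0), ?_, ?_⟩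
  · have hx : omega0 * Q' + x % omega0 = x := by
      conv_rhs => rw [← Ordinal.div_add_mod x omega0, hq]
    have : ((N+1:ℕ) : Ordinal) < x % omega0 := by
      rw [← add_lt_add_iff_left (omega0 * Q'), hx]
      exact h1
    rw [← oNat_spec hmodlt] at this
    exact_mod_cast this
  · rw [oNat_spec hmodlt]
    conv_lhs => rw [← Ordinal.div_add_mod x omega0, hq]

lemma decomp_limQ {γ₀ Q x : Ordinal}
    (h1 : omega0 * (γ₀ + 1) < x) (h2 : x < omega0 * Q) :
    γ₀ < x / omega0 ∧ x / omega0 < Q ∧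
      (x = omega0 * (x / omega0) ∨
        ∃ s : ℕ, 1 ≤ s ∧ x = omega0 * (x / omega0) + s) := by
  refine ⟨?_, ?_, ?_⟩
  · have : γ₀ + 1 ≤ x / omega0 := by
      rw [Ordinal.le_div omega0_ne_zero]; exact h1.le
    exact lt_of_lt_of_le (lt_add_one γ₀) this
  · rw [Ordinal.div_lt omega0_ne_zero]; exact h2
  · have hmodlt : x % omega0 < omega0 := Ordinal.mod_lt x omega0_ne_zero
    rcases eq_or_ne (x % omega0) 0 with h0 | h0
    · left
      conv_lhs => rw [← Ordinal.div_add_mod x omega0]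
      rw [h0, add_zero]
    · right
      refine ⟨oNat (x % omega0), ?_, ?_⟩
      · by_contra h
        push_neg at h
        have h00 : oNat (x % omega0) = 0 := by omega
        have := oNat_spec hmodlt
        rw [h00] at this
        exact h0 (by exact_mod_cast this.symm)
      · rw [oNat_spec hmodlt]
        conv_lhs => rw [← Ordinal.div_add_mod x omega0]

lemma omega_opow_natsucc (r : ℕ) :
    omega0 ^ ((r+1 : ℕ) : Ordinal) = omega0 * omega0 ^ (r : Ordinal) := by
  have : ((r+1 : ℕ) : Ordinal) = 1 + (r : Ordinal) := by
    rw [Ordinal.one_add_natCast, Order.succ_eq_add_one]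
  rw [this, opow_add, opow_one]

lemma Ufn_one_nat (m : ℕ) (hm : 1 ≤ m) : Ufn 1 (m : Ordinal) = {m - 1} := by
  have h := Ufn_mul_add 0 0 m hm
  simp only [mul_zero, zero_add] at h
  rw [h]
  have h0 : Ufn 0 1 = ∅ := by
    simp [Ufn]
  rw [h0]
  simp

lemma MS : ∀ (r N : ℕ) (L : Ordinal), L ≤ omega0 ^ ((r+1 : ℕ) : Ordinal) → Order.IsSuccLimit L →
    ∃ γ, γ < L ∧ ∀ x, γ < x → x < L → ∃ u ∈ Ufn (r+1) x, N < u := by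
  intro r
  induction r with
  | zero =>
    intro N L hL hlim
    have hLω : L = omega0 := by
      apply le_antisymm
      · simpa using hL
      · exact omega0_le_of_isSuccLimit hlim
    subst hLω
    refine ⟨((N+1 : ℕ) : Ordinal), nat_lt_omega0 _, ?_⟩
    intro x hx1 hx2
    obtain ⟨m, rfl⟩ := Ordinal.lt_omega0.1 hx2
    have hm : N + 1 < m := by exact_mod_cast hx1
    rw [Ufn_one_nat m (by omega)]
    exact ⟨m - 1, Finset.mem_singleton_self _, by omega⟩
  | succ r IH =>
    intro N L hL hlim
    obtain ⟨Q, rfl⟩ := (isSuccLimit_iff_omega0_dvd.1 hlim).2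
    have hQne : Q ≠ 0 := by
      rintro rfl
      rw [mul_zero] at hlim
      simpa using hlim.pos
    have hQle : Q ≤ omega0 ^ ((r+1 : ℕ) : Ordinal) := by
      rw [omega_opow_natsucc (r+1)] at hL
      exact (mul_le_mul_iff_right₀ omega0_pos).1 hL
    rcases zero_or_succ_or_isSuccLimit Q with rfl | ⟨Q', rfl⟩ | hQlim
    · exact absurd rfl hQne
    · -- successor case
      rw [← add_one_eq_succ] at *
      refine ⟨omega0 * Q' + ((N+1 : ℕ) : Ordinal), ?_, ?_⟩
      · rw [mul_add_one]
        exact add_lt_add_right (nat_lt_omega0 _) _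
      · intro x hx1 hx2
        obtain ⟨s, hs, rfl⟩ := decomp_succQ hx1 hx2
        rw [Ufn_mul_add (r+1) Q' s (by omega)]
        refine ⟨(Ufn (r+1) (Q' + 1)).sup id + (s - 1), ?_, by omega⟩
        exact Finset.mem_union_right _ (Finset.mem_singleton_self _)
    · -- limit case
      obtain ⟨γ₀, hγ₀, H⟩ := IH N Q hQle hQlim
      refine ⟨omega0 * (γ₀ + 1), ?_, ?_⟩
      · rw [mul_lt_mul_iff_right₀ omega0_pos, add_one_eq_succ]
        exact hQlim.succ_lt hγ₀
      · intro x hx1 hx2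
        obtain ⟨hq1, hq2, hcase⟩ := decomp_limQ hx1 hx2
        rcases hcase with hx | ⟨s, hs, hx⟩
        · rw [hx, Ufn_omega_mul]
          exact H _ hq1 hq2
        · rw [hx, Ufn_mul_add (r+1) _ s hs]
          have hq3 : x / omega0 + 1 < Q := by
            rw [add_one_eq_succ]; exact hQlim.succ_lt hq2
          obtain ⟨u, hu, hNu⟩ := H (x / omega0 + 1) (hq1.trans (lt_add_one _)) hq3
          exact ⟨u, Finset.mem_union_left _ hu, hNu⟩

lemma WS : ∀ (r N : ℕ) (L : Ordinal), L ≤ omega0 ^ ((r+1 : ℕ) : Ordinal) → Order.IsSuccLimit L →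
    ∃ γ, γ < L ∧ ∀ x, γ < x → x ≤ L →
      Ufn (r+1) x ∩ Finset.Iic N = Ufn (r+1) L ∩ Finset.Iic N := by
  intro r
  induction r with
  | zero =>
    intro N L hL hlim
    have hLω : L = omega0 := by
      apply le_antisymm
      · simpa using hL
      · exact omega0_le_of_isSuccLimit hlim
    subst hLω
    have hU : Ufn 1 omega0 = ∅ := by
      have := Ufn_omega_mul 0 1
      rw [mul_one] at this
      rw [this]
      simp [Ufn]
    refine ⟨((N+1 : ℕ) : Ordinal), nat_lt_omega0 _, ?_⟩
    intro x hx1 hx2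
    rcases lt_or_eq_of_le hx2 with hx2 | rfl
    · obtain ⟨m, rfl⟩ := Ordinal.lt_omega0.1 hx2
      have hm : N + 1 < m := by exact_mod_cast hx1
      rw [Ufn_one_nat m (by omega), hU, Finset.empty_inter]
      ext a
      simp only [Finset.mem_inter, Finset.mem_singleton, Finset.mem_Iic,
        Finset.notMem_empty, iff_false, not_and]
      rintro rfl
      omega
    · rfl
  | succ r IH =>
    intro N L hL hlim
    obtain ⟨Q, rfl⟩ := (isSuccLimit_iff_omega0_dvd.1 hlim).2
    have hQne : Q ≠ 0 := by
      rintro rfl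
      rw [mul_zero] at hlim
      simpa using hlim.pos
    have hQle : Q ≤ omega0 ^ ((r+1 : ℕ) : Ordinal) := by
      rw [omega_opow_natsucc (r+1)] at hL
      exact (mul_le_mul_iff_right₀ omega0_pos).1 hL
    have hUL : Ufn (r+2) (omega0 * Q) = Ufn (r+1) Q := Ufn_omega_mul _ _
    rcases zero_or_succ_or_isSuccLimit Q with rfl | ⟨Q', rfl⟩ | hQlim
    · exact absurd rfl hQne
    · rw [← add_one_eq_succ] at *
      refine ⟨omega0 * Q' + ((N+1 : ℕ) : Ordinal), ?_, ?_⟩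
      · rw [mul_add_one]
        exact add_lt_add_right (nat_lt_omega0 _) _
      · intro x hx1 hx2
        rcases lt_or_eq_of_le hx2 with hx2 | rfl
        · obtain ⟨s, hs, rfl⟩ := decomp_succQ hx1 hx2
          rw [Ufn_mul_add (r+1) Q' s (by omega), hUL]
          exact union_inter_Iic (by omega)
        · rfl
    · obtain ⟨γ₁, hγ₁, H₁⟩ := IH N Q hQle hQlim
      obtain ⟨γ₂, hγ₂, H₂⟩ := MS r N Q hQle hQlim
      refine ⟨omega0 * (max γ₁ γ₂ + 1), ?_, ?_⟩
      · rw [mul_lt_mul_iff_right₀ omega0_pos, add_one_eq_succ]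
        exact hQlim.succ_lt (max_lt hγ₁ hγ₂)
      · intro x hx1 hx2
        rcases lt_or_eq_of_le hx2 with hx2 | rfl
        · obtain ⟨hq1, hq2, hcase⟩ := decomp_limQ hx1 hx2
          have hq1a : γ₁ < x / omega0 := lt_of_le_of_lt (le_max_left _ _) hq1
          have hq1b : γ₂ < x / omega0 := lt_of_le_of_lt (le_max_right _ _) hq1
          rcases hcase with hx | ⟨s, hs, hx⟩
          · rw [hx, Ufn_omega_mul, hUL]
            exact H₁ _ hq1a hq2.le
          · rw [hx, Ufn_mul_add (r+1) _ s hs, hUL]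
            have hq3 : x / omega0 + 1 < Q := by
              rw [add_one_eq_succ]; exact hQlim.succ_lt hq2
            obtain ⟨u, hu, hNu⟩ := H₂ (x / omega0 + 1) (hq1b.trans (lt_add_one _)) hq3
            have hsup : N < (Ufn (r+1) (x / omega0 + 1)).sup id :=
              lt_of_lt_of_le hNu (Finset.le_sup (f := id) hu)
            rw [union_inter_Iic (by omega)]
            exact H₁ _ (hq1a.trans (lt_add_one _)) hq3.le
        · rfl

def theta (U : Finset ℕ) (n : ℕ) : ℤ :=
  (if n ∈ U then 2 else 0) - (if (U ∩ Finset.Iic n).Nonempty then 1 else 0)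

lemma theta_eq_of_inter {U V : Finset ℕ} {N n : ℕ} (hn : n ≤ N)
    (h : U ∩ Finset.Iic N = V ∩ Finset.Iic N) : theta U n = theta V n := by
  have hmem : ∀ m ≤ N, (m ∈ U ↔ m ∈ V) := by
    intro m hm
    constructor
    · intro hmU
      have : m ∈ U ∩ Finset.Iic N := Finset.mem_inter.2 ⟨hmU, Finset.mem_Iic.2 hm⟩
      rw [h] at this
      exact (Finset.mem_inter.1 this).1
    · intro hmV
      have : m ∈ V ∩ Finset.Iic N := Finset.mem_inter.2 ⟨hmV, Finset.mem_Iic.2 hm⟩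
      rw [← h] at this
      exact (Finset.mem_inter.1 this).1
  have hne : (U ∩ Finset.Iic n).Nonempty ↔ (V ∩ Finset.Iic n).Nonempty := by
    constructor
    · rintro ⟨m, hm⟩
      obtain ⟨hmU, hmn⟩ := Finset.mem_inter.1 hm
      have hmn' := Finset.mem_Iic.1 hmn
      exact ⟨m, Finset.mem_inter.2 ⟨(hmem m (hmn'.trans hn)).1 hmU, hmn⟩⟩
    · rintro ⟨m, hm⟩
      obtain ⟨hmV, hmn⟩ := Finset.mem_inter.1 hm
      have hmn' := Finset.mem_Iic.1 hmn
      exact ⟨m, Finset.mem_inter.2 ⟨(hmem m (hmn'.trans hn)).2 hmV, hmn⟩⟩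
  rw [theta, theta, if_congr (hmem n hn) rfl rfl, if_congr hne rfl rfl]

lemma abs_theta_le (U : Finset ℕ) (n : ℕ) : |theta U n| ≤ 1 := by
  rw [theta]
  by_cases h1 : n ∈ U
  · have h2 : (U ∩ Finset.Iic n).Nonempty :=
      ⟨n, Finset.mem_inter.2 ⟨h1, Finset.mem_Iic.2 le_rfl⟩⟩
    rw [if_pos h1, if_pos h2]
    norm_num
  · rw [if_neg h1]
    by_cases h2 : (U ∩ Finset.Iic n).Nonempty <;> simp [h2]

noncomputable def val (r : ℕ) (σ : Finset ℕ) (x : Ordinal) : ℤ :=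
  ∑ n ∈ σ, theta (Ufn r x) (n + 1)

noncomputable def Ffun (r : ℕ) (σ : Finset ℕ) (x : Ordinal) : ℝ :=
  if x ≤ omega0 ^ (r : Ordinal) then (val r σ x : ℝ) else 0

lemma Ffun_continuous (r' : ℕ) (σ : Finset ℕ) : Continuous (Ffun (r'+1) σ) := by
  set r := r' + 1 with hrdef
  rw [continuous_iff_continuousAt]
  intro x₀
  have key : ∀ s : Set Ordinal, IsOpen s → x₀ ∈ s →
      (∀ y ∈ s, Ffun r σ y = Ffun r σ x₀) → ContinuousAt (Ffun r σ) x₀ := by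
    intro s hs hx hconst
    exact Filter.EventuallyEq.continuousAt
      (Filter.eventuallyEq_of_mem (hs.mem_nhds hx) hconst)
  have hlt1 : ∀ {y x : Ordinal}, y < x + 1 → y ≤ x := by
    intro y x h
    rwa [add_one_eq_succ, Order.lt_succ_iff] at h
  rcases zero_or_succ_or_isSuccLimit x₀ with rfl | ⟨a, rfl⟩ | hlim
  · refine key (Set.Iio 1) isOpen_Iio (Set.mem_Iio.2 zero_lt_one) ?_
    intro y hy
    have : y = 0 := Ordinal.lt_one_iff_zero.1 hy
    rw [this]
  · refine key (Set.Ioo a (Order.succ a + 1)) isOpen_Ioo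
      ⟨Order.lt_succ a, lt_add_one _⟩ ?_
    intro y hy
    have h1 : y ≤ Order.succ a := hlt1 hy.2
    have h2 : Order.succ a ≤ y := Order.succ_le_of_lt hy.1
    rw [le_antisymm h1 h2]
  · rcases le_or_gt x₀ (omega0 ^ (r : Ordinal)) with hle | hgt
    · obtain ⟨γ, hγ, H⟩ := WS r' (σ.sup id + 1) x₀ hle hlim
      refine key (Set.Ioo γ (x₀ + 1)) isOpen_Ioo ⟨hγ, lt_add_one _⟩ ?_
      intro y hy
      have hy2 : y ≤ x₀ := hlt1 hy.2
      have hyle : y ≤ omega0 ^ (r : Ordinal) := hy2.trans hle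
      rw [Ffun, Ffun, if_pos hyle, if_pos hle]
      congr 1
      rw [val, val]
      apply Finset.sum_congr rfl
      intro n hn
      have hnN : n + 1 ≤ σ.sup id + 1 := by
        have := Finset.le_sup (f := id) hn
        simp only [id] at this
        omega
      exact theta_eq_of_inter hnN (H y hy.1 hy2)
    · refine key (Set.Ioo (omega0 ^ (r : Ordinal)) (x₀ + 1)) isOpen_Ioo
        ⟨hgt, lt_add_one _⟩ ?_
      intro y hy
      rw [Ffun, Ffun, if_neg (not_le.2 hy.1), if_neg (not_le.2 hgt)]

lemma Ufn_zero_one : Ufn 0 1 = ∅ := by simp [Ufn]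

lemma realizeFull : ∀ (m : ℕ) (U : Finset ℕ), U.card = m + 1 →
    ∃ (q : Ordinal) (s : ℕ), 1 ≤ s ∧ q < omega0 ^ (m : Ordinal) ∧
      Ufn (m+1) (omega0 * q + s) = U := by
  intro m
  induction m with
  | zero =>
    intro U hU
    obtain ⟨u, rfl⟩ := Finset.card_eq_one.1 hU
    refine ⟨0, u + 1, by omega, ?_, ?_⟩
    · rw [Nat.cast_zero, opow_zero]; exact zero_lt_one
    · rw [Ufn_mul_add 0 0 (u+1) (by omega), zero_add, Ufn_zero_one]
      simp
  | succ m IH =>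
    intro U hU
    have hne : U.Nonempty := Finset.card_pos.1 (by omega)
    set M := U.max' hne with hMdef
    have hMT : M ∈ U := U.max'_mem hne
    set U' := U.erase M with hU'def
    have hU'card : U'.card = m + 1 := by
      rw [hU'def, Finset.card_erase_of_mem hMT]; omega
    have hU'ne : U'.Nonempty := Finset.card_pos.1 (by omega)
    have hltM : ∀ u ∈ U', u < M := by
      intro u hu
      exact lt_of_le_of_ne (U.le_max' u (Finset.mem_of_mem_erase hu))
        (Finset.ne_of_mem_erase hu)
    have hMpos : 1 ≤ M := by
      obtain ⟨u₀, hu₀⟩ := hU'ne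
      have := hltM u₀ hu₀
      omega
    have hsupM : U'.sup id < M := by
      rw [Finset.sup_lt_iff (by simpa using (show 0 < M from hMpos) : (⊥:ℕ) < M)]
      intro u hu
      exact hltM u hu
    obtain ⟨q', s', hs', hq', hU'eq⟩ := IH U' hU'card
    set q : Ordinal := omega0 * q' + ((s' - 1 : ℕ) : Ordinal) with hqdef
    have hq1 : q + 1 = omega0 * q' + (s' : Ordinal) := by
      rw [hqdef, add_assoc]
      congr 1
      rw [← Nat.cast_succ]
      exact congrArg _ (by omega)
    set s : ℕ := M - U'.sup id + 1 with hsdef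
    refine ⟨q, s, by omega, ?_, ?_⟩
    · have h1 : q < omega0 * (q' + 1) := by
        rw [mul_add_one]
        exact add_lt_add_right (nat_lt_omega0 _) _
      have h2 : q' + 1 ≤ omega0 ^ (m : Ordinal) := by
        rw [add_one_eq_succ, Order.succ_le_iff]
        exact hq'
      calc q < omega0 * (q' + 1) := h1
        _ ≤ omega0 * omega0 ^ (m : Ordinal) := by
            exact mul_le_mul_right h2 _
        _ = omega0 ^ ((m + 1 : ℕ) : Ordinal) := (omega_opow_natsucc m).symm
    · rw [Ufn_mul_add (m+1) q s (by omega), hq1, hU'eq]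
      have hsup : U'.sup id + (s - 1) = M := by omega
      rw [hsup, hU'def, Finset.union_comm, ← Finset.insert_eq]
      exact Finset.insert_erase hMT

lemma Ufn_lift : ∀ (j c : ℕ) (x : Ordinal),
    Ufn (c + j) (omega0 ^ (j : Ordinal) * x) = Ufn c x := by
  intro j
  induction j with
  | zero =>
    intro c x
    rw [Nat.cast_zero, opow_zero, one_mul, Nat.add_zero]
  | succ j IH =>
    intro c x
    have h1 : omega0 ^ ((j+1 : ℕ) : Ordinal) * x
        = omega0 * (omega0 ^ (j : Ordinal) * x) := by
      rw [omega_opow_natsucc j, mul_assoc]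
    rw [h1, show c + (j+1) = (c + j) + 1 by omega, Ufn_omega_mul, IH]

lemma realize (r : ℕ) (U : Finset ℕ) (hne : U.Nonempty) (hcard : U.card ≤ r) :
    ∃ x : Ordinal, x ≤ omega0 ^ (r : Ordinal) ∧ Ufn r x = U := by
  obtain ⟨m, hm⟩ : ∃ m, U.card = m + 1 := by
    have := Finset.card_pos.2 hne
    exact ⟨U.card - 1, by omega⟩
  obtain ⟨q, s, hs, hq, hUeq⟩ := realizeFull m U hm
  set x₀ : Ordinal := omega0 * q + (s : Ordinal) with hx₀def
  have hx₀ : x₀ < omega0 ^ ((m+1 : ℕ) : Ordinal) := by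
    calc x₀ < omega0 * (q+1) := by
          rw [hx₀def, mul_add_one]
          exact add_lt_add_right (nat_lt_omega0 _) _
      _ ≤ omega0 * omega0 ^ (m : Ordinal) := by
          refine mul_le_mul_right ?_ _
          rw [add_one_eq_succ, Order.succ_le_iff]
          exact hq
      _ = _ := (omega_opow_natsucc m).symm
  set j := r - (m+1) with hjdef
  have hrj : m + 1 + j = r := by omega
  refine ⟨omega0 ^ (j : Ordinal) * x₀, ?_, ?_⟩
  · calc omega0 ^ (j : Ordinal) * x₀
        ≤ omega0 ^ (j : Ordinal) * omega0 ^ ((m+1 : ℕ) : Ordinal) :=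
          mul_le_mul_right hx₀.le _
      _ = omega0 ^ ((j : Ordinal) + ((m+1 : ℕ) : Ordinal)) := (opow_add _ _ _).symm
      _ = omega0 ^ ((r : ℕ) : Ordinal) := by
          congr 1
          rw [← Nat.cast_add]
          exact congrArg _ (by omega)
  · rw [← hrj, Ufn_lift j (m+1) x₀, hUeq]


lemma exists_kth_largest (j : ℕ) : ∀ T : Finset ℕ, j + 1 ≤ T.card →
    ∃ x ∈ T, (T.filter (fun y => x < y)).card = j := by
  induction j with
  | zero =>
    intro T hT
    have hne : T.Nonempty := Finset.card_pos.1 (by omega)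
    refine ⟨T.max' hne, T.max'_mem hne, ?_⟩
    rw [Finset.card_eq_zero, Finset.filter_eq_empty_iff]
    intro y hy
    exact not_lt.2 (T.le_max' y hy)
  | succ j IH =>
    intro T hT
    have hne : T.Nonempty := Finset.card_pos.1 (by omega)
    set M := T.max' hne with hM
    have hMT : M ∈ T := T.max'_mem hne
    have hcard : j + 1 ≤ (T.erase M).card := by
      rw [Finset.card_erase_of_mem hMT]; omega
    obtain ⟨x, hx, hfil⟩ := IH (T.erase M) hcard
    have hxT : x ∈ T := Finset.mem_of_mem_erase hx
    have hxM : x < M := lt_of_le_of_ne (T.le_max' x hxT) (Finset.ne_of_mem_erase hx)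
    refine ⟨x, hxT, ?_⟩
    have hsplit : T.filter (fun y => x < y)
        = insert M ((T.erase M).filter (fun y => x < y)) := by
      ext y
      simp only [Finset.mem_filter, Finset.mem_insert, Finset.mem_erase]
      constructor
      · rintro ⟨hyT, hxy⟩
        by_cases hyM : y = M
        · exact Or.inl hyM
        · exact Or.inr ⟨⟨hyM, hyT⟩, hxy⟩
      · rintro (rfl | ⟨⟨_, hyT⟩, hxy⟩)
        · exact ⟨hMT, hxM⟩
        · exact ⟨hyT, hxy⟩
    rw [hsplit, Finset.card_insert_of_notMem, hfil]
    simp only [Finset.mem_filter, Finset.mem_erase]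
    rintro ⟨⟨hMM, _⟩, _⟩
    exact hMM rfl

lemma nonempty_inter_iff {U : Finset ℕ} (hU : U.Nonempty) (m : ℕ) :
    (U ∩ Finset.Iic m).Nonempty ↔ U.min' hU ≤ m := by
  constructor
  · rintro ⟨u, hu⟩
    obtain ⟨huU, hum⟩ := Finset.mem_inter.1 hu
    exact (U.min'_le u huU).trans (Finset.mem_Iic.1 hum)
  · intro h
    exact ⟨U.min' hU, Finset.mem_inter.2 ⟨U.min'_mem hU, Finset.mem_Iic.2 h⟩⟩

lemma sum_theta (U : Finset ℕ) (hU : U.Nonempty) (S : Finset ℕ) :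
    ∑ m ∈ S, theta U m
      = 2 * ((S ∩ U).card : ℤ) - ((S.filter (fun m => U.min' hU ≤ m)).card : ℤ) := by
  have h1 : ∀ m, theta U m
      = (if m ∈ U then (2:ℤ) else 0) - (if U.min' hU ≤ m then (1:ℤ) else 0) := by
    intro m
    rw [theta, if_congr (nonempty_inter_iff hU m) rfl rfl]
  simp only [h1]
  rw [Finset.sum_sub_distrib]
  congr 1
  · rw [← Finset.sum_filter, Finset.sum_const, Finset.filter_mem_eq_inter]
    push_cast
    ring
  · rw [← Finset.sum_filter, Finset.sum_const]
    push_cast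
    ring

lemma LB (r k : ℕ) (hr : 1 ≤ r) (hrk : r ≤ k) (S T : Finset ℕ)
    (hd : Disjoint S T) (h0S : 0 ∉ S) (h0T : 0 ∉ T)
    (hTS : T.card ≤ S.card) (hSk : S.card ≤ k) :
    ∃ U : Finset ℕ, U.Nonempty ∧ U.card ≤ r ∧
      (min (S.card + T.card) (2*r) : ℤ) ≤
        |∑ m ∈ S, theta U m - ∑ m ∈ T, theta U m| := by
  rcases lt_or_ge T.card r with hb | hb
  · -- small case : U = {0} ∪ T
    refine ⟨insert 0 T, Finset.insert_nonempty _ _, ?_, ?_⟩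
    · rw [Finset.card_insert_of_notMem h0T]; omega
    · have hU : (insert 0 T).Nonempty := Finset.insert_nonempty _ _
      have hmin : (insert 0 T).min' hU = 0 := by
        apply le_antisymm
        · exact Finset.min'_le _ _ (Finset.mem_insert_self _ _)
        · exact Nat.zero_le _
      rw [sum_theta _ hU, sum_theta _ hU, hmin]
      have hSU : S ∩ insert 0 T = ∅ := by
        rw [Finset.eq_empty_iff_forall_notMem]
        intro m hm
        obtain ⟨hmS, hmU⟩ := Finset.mem_inter.1 hm
        rcases Finset.mem_insert.1 hmU with rfl | hmT
        · exact h0S hmS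
        · exact (Finset.disjoint_left.1 hd) hmS hmT
      have hTU : T ∩ insert 0 T = T := by
        apply Finset.inter_eq_left.2
        exact Finset.subset_insert _ _
      have hSf : S.filter (fun m => 0 ≤ m) = S := by
        apply Finset.filter_true_of_mem
        intro m _; exact Nat.zero_le m
      have hTf : T.filter (fun m => 0 ≤ m) = T := by
        apply Finset.filter_true_of_mem
        intro m _; exact Nat.zero_le m
      rw [hSU, hTU, hSf, hTf]
      simp only [Finset.card_empty]
      have : (2 * ((0:ℕ):ℤ) - S.card) - (2 * (T.card:ℤ) - T.card)
          = -(S.card + T.card) := by push_cast; ring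
      rw [this, abs_neg]
      have habs : |((S.card:ℤ) + T.card)| = (S.card:ℤ) + T.card := by
        apply abs_of_nonneg; positivity
      rw [habs]
      have := min_le_left (S.card + T.card) (2*r)
      push_cast
      omega
  · -- both big : r ≤ T.card ≤ S.card
    obtain ⟨xs, hxsT, hxsfil⟩ := exists_kth_largest (r-1) T (by omega)
    obtain ⟨ys, hysS, hysfil⟩ := exists_kth_largest (r-1) S (by omega)
    have hxy : xs ≠ ys := by
      intro h
      exact (Finset.disjoint_left.1 hd) (h ▸ hysS) hxsT
    rcases lt_or_gt_of_ne hxy with hlt | hgt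
    · -- xs < ys : use U = {xs} ∪ top of T
      set U := insert xs (T.filter (fun y => xs < y)) with hUdef
      have hUne : U.Nonempty := Finset.insert_nonempty _ _
      have hUsubT : U ⊆ T := by
        intro m hm
        rcases Finset.mem_insert.1 hm with rfl | hm
        · exact hxsT
        · exact Finset.mem_of_mem_filter _ hm
      have hUcard : U.card = r := by
        rw [hUdef, Finset.card_insert_of_notMem, hxsfil]
        · omega
        · simp only [Finset.mem_filter]
          rintro ⟨_, h⟩
          exact lt_irrefl _ h
      have hmin : U.min' hUne = xs := by
        apply le_antisymm
        · exact Finset.min'_le _ _ (Finset.mem_insert_self _ _)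
        · rcases Finset.mem_insert.1 (U.min'_mem hUne) with h | h
          · rw [h]
          · exact (le_of_lt (Finset.mem_filter.1 h).2)
      refine ⟨U, hUne, le_of_eq hUcard, ?_⟩
      rw [sum_theta _ hUne, sum_theta _ hUne, hmin]
      have hSU : S ∩ U = ∅ := by
        rw [Finset.eq_empty_iff_forall_notMem]
        intro m hm
        obtain ⟨hmS, hmU⟩ := Finset.mem_inter.1 hm
        exact (Finset.disjoint_left.1 hd) hmS (hUsubT hmU)
      have hTU : T ∩ U = U := Finset.inter_eq_right.2 hUsubT
      have hTf : T.filter (fun m => xs ≤ m) = U := by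
        ext m
        simp only [hUdef, Finset.mem_filter, Finset.mem_insert]
        constructor
        · rintro ⟨hmT, hle⟩
          rcases eq_or_lt_of_le hle with h | h
          · exact Or.inl h.symm
          · exact Or.inr ⟨hmT, h⟩
        · rintro (rfl | ⟨hmT, h⟩)
          · exact ⟨hxsT, le_rfl⟩
          · exact ⟨hmT, h.le⟩
      have hSf : r ≤ (S.filter (fun m => xs ≤ m)).card := by
        have hsub : insert ys (S.filter (fun y => ys < y))
            ⊆ S.filter (fun m => xs ≤ m) := by
          intro m hm
          rcases Finset.mem_insert.1 hm with rfl | hm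
          · exact Finset.mem_filter.2 ⟨hysS, hlt.le⟩
          · obtain ⟨hmS, hym⟩ := Finset.mem_filter.1 hm
            exact Finset.mem_filter.2 ⟨hmS, (hlt.trans hym).le⟩
        have hcard : (insert ys (S.filter (fun y => ys < y))).card = r := by
          rw [Finset.card_insert_of_notMem, hysfil]
          · omega
          · simp only [Finset.mem_filter]
            rintro ⟨_, h⟩
            exact lt_irrefl _ h
        calc r = (insert ys (S.filter (fun y => ys < y))).card := hcard.symm
          _ ≤ _ := Finset.card_le_card hsub
      rw [hSU, hTU, hTf, hUcard]
      simp only [Finset.card_empty]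
      set s1 := (S.filter (fun m => xs ≤ m)).card with hs1
      have : (2 * ((0:ℕ):ℤ) - s1) - (2 * (r:ℤ) - r) = -(s1 + r) := by
        push_cast; ring
      rw [this, abs_neg]
      have habs : |((s1:ℤ) + r)| = (s1:ℤ) + r := by
        apply abs_of_nonneg; positivity
      rw [habs]
      have := min_le_right (S.card + T.card) (2*r)
      push_cast
      omega
    · -- ys < xs : use U = {ys} ∪ top of S
      set U := insert ys (S.filter (fun y => ys < y)) with hUdef
      have hUne : U.Nonempty := Finset.insert_nonempty _ _
      have hUsubS : U ⊆ S := by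
        intro m hm
        rcases Finset.mem_insert.1 hm with rfl | hm
        · exact hysS
        · exact Finset.mem_of_mem_filter _ hm
      have hUcard : U.card = r := by
        rw [hUdef, Finset.card_insert_of_notMem, hysfil]
        · omega
        · simp only [Finset.mem_filter]
          rintro ⟨_, h⟩
          exact lt_irrefl _ h
      have hmin : U.min' hUne = ys := by
        apply le_antisymm
        · exact Finset.min'_le _ _ (Finset.mem_insert_self _ _)
        · rcases Finset.mem_insert.1 (U.min'_mem hUne) with h | h
          · rw [h]
          · exact (le_of_lt (Finset.mem_filter.1 h).2)
      refine ⟨U, hUne, le_of_eq hUcard, ?_⟩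
      rw [sum_theta _ hUne, sum_theta _ hUne, hmin]
      have hTU : T ∩ U = ∅ := by
        rw [Finset.eq_empty_iff_forall_notMem]
        intro m hm
        obtain ⟨hmT, hmU⟩ := Finset.mem_inter.1 hm
        exact (Finset.disjoint_left.1 hd) (hUsubS hmU) hmT
      have hSU : S ∩ U = U := Finset.inter_eq_right.2 hUsubS
      have hSf : S.filter (fun m => ys ≤ m) = U := by
        ext m
        simp only [hUdef, Finset.mem_filter, Finset.mem_insert]
        constructor
        · rintro ⟨hmS, hle⟩
          rcases eq_or_lt_of_le hle with h | h
          · exact Or.inl h.symm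
          · exact Or.inr ⟨hmS, h⟩
        · rintro (rfl | ⟨hmS, h⟩)
          · exact ⟨hysS, le_rfl⟩
          · exact ⟨hmS, h.le⟩
      have hTf : r ≤ (T.filter (fun m => ys ≤ m)).card := by
        have hsub : insert xs (T.filter (fun y => xs < y))
            ⊆ T.filter (fun m => ys ≤ m) := by
          intro m hm
          rcases Finset.mem_insert.1 hm with rfl | hm
          · exact Finset.mem_filter.2 ⟨hxsT, hgt.le⟩
          · obtain ⟨hmT, hym⟩ := Finset.mem_filter.1 hm
            exact Finset.mem_filter.2 ⟨hmT, (hgt.trans hym).le⟩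
        have hcard : (insert xs (T.filter (fun y => xs < y))).card = r := by
          rw [Finset.card_insert_of_notMem, hxsfil]
          · omega
          · simp only [Finset.mem_filter]
            rintro ⟨_, h⟩
            exact lt_irrefl _ h
        calc r = (insert xs (T.filter (fun y => xs < y))).card := hcard.symm
          _ ≤ _ := Finset.card_le_card hsub
      rw [hTU, hSU, hSf, hUcard]
      simp only [Finset.card_empty]
      set t1 := (T.filter (fun m => ys ≤ m)).card with ht1
      have : (2 * (r:ℤ) - r) - (2 * ((0:ℕ):ℤ) - t1) = (r:ℤ) + t1 := by
        push_cast; ring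
      rw [this]
      have habs : |((r:ℤ) + t1)| = (r:ℤ) + t1 := by
        apply abs_of_nonneg; positivity
      rw [habs]
      have := min_le_right (S.card + T.card) (2*r)
      push_cast
      omega


lemma val_sub (R : ℕ) (x : Ordinal) (s t : Finset ℕ) :
    val R s x - val R t x
      = (∑ n ∈ s \ t, theta (Ufn R x) (n+1)) - ∑ n ∈ t \ s, theta (Ufn R x) (n+1) := by
  have h1 := Finset.sum_sdiff (f := fun n => theta (Ufn R x) (n+1))
    (Finset.inter_subset_left (s₁ := s) (s₂ := t))
  have h2 := Finset.sum_sdiff (f := fun n => theta (Ufn R x) (n+1))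
    (Finset.inter_subset_left (s₁ := t) (s₂ := s))
  rw [Finset.sdiff_inter_self_left] at h1 h2
  rw [val, val, ← h1, ← h2, Finset.inter_comm]
  ring

lemma abs_val_sub_le (R : ℕ) (x : Ordinal) (s t : Finset ℕ) :
    |val R s x - val R t x| ≤ ((s \ t).card : ℤ) + ((t \ s).card : ℤ) := by
  rw [val_sub]
  have hb : ∀ u : Finset ℕ, |∑ n ∈ u, theta (Ufn R x) (n+1)| ≤ (u.card : ℤ) := by
    intro u
    calc |∑ n ∈ u, theta (Ufn R x) (n+1)| ≤ ∑ n ∈ u, |theta (Ufn R x) (n+1)| :=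
          Finset.abs_sum_le_sum_abs _ _
      _ ≤ ∑ _n ∈ u, 1 := Finset.sum_le_sum fun n _ => abs_theta_le _ _
      _ = (u.card : ℤ) := by simp
  calc |_ - _| ≤ |∑ n ∈ s \ t, theta (Ufn R x) (n+1)|
        + |∑ n ∈ t \ s, theta (Ufn R x) (n+1)| := abs_sub _ _
    _ ≤ _ := add_le_add (hb _) (hb _)

theorem deltaK_embeds_C_omega_pow_r (k r : ℕ) (hr : 1 ≤ r) (hrk : r ≤ k) :
    ∃ φ : {σ : Finset ℕ // σ.card ≤ k} → C(↥(Set.Iic (Ordinal.omega0 ^ (r : Ordinal))), ℝ),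
      ∀ σ τ : {σ : Finset ℕ // σ.card ≤ k},
        ((r : ℝ) / (k : ℝ)) * ((symmDiff σ.1 τ.1).card : ℝ) ≤ ‖φ σ - φ τ‖ ∧
          ‖φ σ - φ τ‖ ≤ ((symmDiff σ.1 τ.1).card : ℝ) := by
  obtain ⟨r', rfl⟩ : ∃ r', r = r' + 1 := ⟨r - 1, by omega⟩
  set R := r' + 1 with hRdef
  have hk : 1 ≤ k := le_trans hr hrk
  set Φ : {σ : Finset ℕ // σ.card ≤ k} → C(↥(Set.Iic (omega0 ^ (R : Ordinal))), ℝ) :=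
    fun σ => ⟨fun p => Ffun R σ.1 p.1,
      (Ffun_continuous r' σ.1).comp continuous_subtype_val⟩ with hΦdef
  refine ⟨Φ, ?_⟩
  intro σ τ
  set A := σ.1 \ τ.1 with hAdef
  set B := τ.1 \ σ.1 with hBdef
  have hdisj : Disjoint A B := disjoint_sdiff_sdiff
  have hAk : A.card ≤ k := le_trans (Finset.card_le_card (Finset.sdiff_subset)) σ.2
  have hBk : B.card ≤ k := le_trans (Finset.card_le_card (Finset.sdiff_subset)) τ.2
  have hdcard : (symmDiff σ.1 τ.1).card = A.card + B.card := by
    rw [symmDiff_def, Finset.sup_eq_union, Finset.card_union_of_disjoint hdisj]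
  set d := A.card + B.card with hddef
  have hd2k : d ≤ 2 * k := by omega
  have happly : ∀ (ρ : {σ : Finset ℕ // σ.card ≤ k})
      (p : (Set.Iic (omega0 ^ (R : Ordinal)))), Φ ρ p = Ffun R ρ.1 p.1 := fun ρ p => rfl
  have hdiff : ∀ p : (Set.Iic (omega0 ^ (R : Ordinal))),
      (Φ σ - Φ τ) p = Ffun R σ.1 p.1 - Ffun R τ.1 p.1 := by
    intro p
    rw [ContinuousMap.sub_apply, happly, happly]
  have habs_eq : ∀ p : (Set.Iic (omega0 ^ (R : Ordinal))),
      Ffun R σ.1 p.1 - Ffun R τ.1 p.1 = ((val R σ.1 p.1 - val R τ.1 p.1 : ℤ) : ℝ) := by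
    intro p
    have hple : (p : Ordinal) ≤ omega0 ^ (R : Ordinal) := p.2
    rw [Ffun, Ffun, if_pos hple, if_pos hple, Int.cast_sub]
  constructor
  · -- lower bound
    rw [hdcard]
    set S := A.image (· + 1) with hSdef
    set T := B.image (· + 1) with hTdef
    have hinj : Function.Injective (fun n : ℕ => n + 1) := by
      intro a b h
      have h' : a + 1 = b + 1 := h
      omega
    have hScard : S.card = A.card := Finset.card_image_of_injective _ hinj
    have hTcard : T.card = B.card := Finset.card_image_of_injective _ hinj
    have hdisjST : Disjoint S T := by
      rw [Finset.disjoint_left]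
      intro m hmS hmT
      obtain ⟨n₁, hn₁, rfl⟩ := Finset.mem_image.1 hmS
      obtain ⟨n₂, hn₂, he⟩ := Finset.mem_image.1 hmT
      have he' : n₂ + 1 = n₁ + 1 := by simpa using he
      have : n₂ = n₁ := by omega
      subst this
      exact (Finset.disjoint_left.1 hdisj) hn₁ hn₂
    have h0S : 0 ∉ S := by
      intro h
      obtain ⟨n, _, hn⟩ := Finset.mem_image.1 h
      simp at hn
    have h0T : 0 ∉ T := by
      intro h
      obtain ⟨n, _, hn⟩ := Finset.mem_image.1 h
      simp at hn
    have hLB : ∃ U : Finset ℕ, U.Nonempty ∧ U.card ≤ R ∧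
        (min d (2*R) : ℤ) ≤ |∑ m ∈ S, theta U m - ∑ m ∈ T, theta U m| := by
      rcases le_total B.card A.card with hab | hab
      · obtain ⟨U, h1, h2, h3⟩ := LB R k hr hrk S T hdisjST h0S h0T
          (by rw [hScard, hTcard]; exact hab) (by rw [hScard]; exact hAk)
        refine ⟨U, h1, h2, ?_⟩
        rwa [hScard, hTcard] at h3
      · obtain ⟨U, h1, h2, h3⟩ := LB R k hr hrk T S hdisjST.symm h0T h0S
          (by rw [hScard, hTcard]; exact hab) (by rw [hTcard]; exact hBk)
        refine ⟨U, h1, h2, ?_⟩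
        rw [abs_sub_comm] at h3
        have hc : ((T.card : ℤ) + S.card) = ((S.card : ℤ) + T.card) := by ring
        rw [hc, hScard, hTcard] at h3
        exact h3
    obtain ⟨U, hUne, hUcard, hUval⟩ := hLB
    obtain ⟨xs, hxsle, hUx⟩ := realize R U hUne hUcard
    set p : (Set.Iic (omega0 ^ (R : Ordinal))) := ⟨xs, hxsle⟩ with hpdef
    have hsumA : ∑ m ∈ S, theta U m = ∑ n ∈ A, theta (Ufn R xs) (n+1) := by
      rw [hSdef, ← hUx]
      exact Finset.sum_image (fun a _ b _ h => hinj h)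
    have hsumB : ∑ m ∈ T, theta U m = ∑ n ∈ B, theta (Ufn R xs) (n+1) := by
      rw [hTdef, ← hUx]
      exact Finset.sum_image (fun a _ b _ h => hinj h)
    have hvaldiff : val R σ.1 xs - val R τ.1 xs
        = ∑ m ∈ S, theta U m - ∑ m ∈ T, theta U m := by
      rw [val_sub, ← hAdef, ← hBdef, hsumA, hsumB]
    have harith : ((R : ℝ) / k) * d ≤ ((min d (2*R) : ℕ) : ℝ) := by
      rw [div_mul_eq_mul_div, div_le_iff₀ (by positivity : (0:ℝ) < (k:ℝ))]
      have hnat : R * d ≤ (min d (2*R)) * k := by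
        rcases le_total d (2*R) with h | h
        · rw [min_eq_left h]
          calc R * d ≤ k * d := Nat.mul_le_mul_right d hrk
            _ = d * k := Nat.mul_comm _ _
        · rw [min_eq_right h]
          calc R * d ≤ R * (2 * k) := Nat.mul_le_mul_left R hd2k
            _ = 2 * R * k := by ring
      exact_mod_cast hnat
    refine le_trans harith ?_
    have hnorm : ((min d (2*R) : ℕ) : ℝ) ≤ |Ffun R σ.1 xs - Ffun R τ.1 xs| := by
      have hxp : (p : Ordinal) = xs := rfl
      have h1 : Ffun R σ.1 xs - Ffun R τ.1 xs
          = ((val R σ.1 xs - val R τ.1 xs : ℤ) : ℝ) := by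
        have := habs_eq p
        rwa [hxp] at this
      rw [h1, ← Int.cast_abs]
      have h2 : (min d (2*R) : ℤ) ≤ |val R σ.1 xs - val R τ.1 xs| := by
        rw [hvaldiff]; exact hUval
      exact_mod_cast h2
    refine le_trans hnorm ?_
    have h3 : |Ffun R σ.1 xs - Ffun R τ.1 xs| = ‖(Φ σ - Φ τ) p‖ := by
      rw [hdiff p, Real.norm_eq_abs]
    rw [h3]
    exact ContinuousMap.norm_coe_le_norm _ p
  · -- upper bound
    rw [hdcard]
    apply (ContinuousMap.norm_le _ (by positivity)).2
    intro p
    rw [hdiff p, habs_eq p, Real.norm_eq_abs, ← Int.cast_abs]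
    have h := abs_val_sub_le R p.1 σ.1 τ.1
    rw [← hAdef, ← hBdef] at h
    have h2 : |val R σ.1 p.1 - val R τ.1 p.1| ≤ ((A.card + B.card : ℕ) : ℤ) := by
      push_cast
      push_cast at h
      omega
    exact_mod_cast h2
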